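/- (Hall, 1947) The Minkowski sum C(4) + C(4) = {x + y : x ∈ C(4), y ∈ C(4)} equals the closed interval [√2 − 1, 4(√2 − 1)]. -/

import Mathlib

/-- The Gauss map `G(x) = {1/x}`. -/
noncomputable def gaussMap (x : ℝ) : ℝ := Int.fract x⁻¹

/-- `C(N)`: the set of irrational numbers in `(0,1)` whose continued fraction expansion
`[0; a₁, a₂, …]` has all partial quotients `aᵢ ≤ N`, i.e. `⌊1/Gⁿ(x)⌋ ≤ N` for all `n ≥ 0`. -/
def cantorSetCF (N : ℕ) : Set ℝ :=
  {x | x ∈ Set.Ioo (0 : ℝ) 1 ∧ Irrational x ∧ ∀ n : ℕ, ⌊(gaussMap^[n] x)⁻¹⌋ ≤ (N : ℤ)}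


noncomputable section
namespace HallP

def r : ℝ := Real.sqrt 2

lemma r_sq : r ^ 2 = 2 := Real.sq_sqrt (by norm_num)
lemma r_nonneg : 0 ≤ r := Real.sqrt_nonneg 2
lemma r_gt : 1.4142 < r := by
  rw [show r = Real.sqrt 2 from rfl, show (1.4142:ℝ) = Real.sqrt (1.4142^2) by
    rw [Real.sqrt_sq]; norm_num]
  exact Real.sqrt_lt_sqrt (by positivity) (by norm_num)
lemma r_lt : r < 1.41422 := by
  nlinarith [r_sq, r_nonneg]

def m : ℝ := (r - 1)/2
def e1 : ℝ := 2*(r-1)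
def e2 : ℝ := (6-2*r)/7
def e3 : ℝ := (10-2*r)/23
def gB0 : ℝ := (2*r+1)/7
def gB1 : ℝ := r/4
def gA2 : ℝ := (14-2*r)/47
def gB2 : ℝ := (2*r-1)/7

def eS : ℕ → ℝ | 0 => e1 | 1 => e2 | _ => e3
def gAS : ℕ → ℝ | 0 => e2 | 1 => e3 | _ => gA2
def gBS : ℕ → ℝ | 0 => gB0 | 1 => gB1 | _ => gB2

lemma m_pos : 0 < m := by unfold m; nlinarith [r_gt]
lemma e1_lt_one : e1 < 1 := by unfold e1; nlinarith [r_lt]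
lemma m_lt_gA : ∀ s, m < gAS s
  | 0 => by show m < e2; unfold m e2; nlinarith [r_lt]
  | 1 => by show m < e3; unfold m e3; nlinarith [r_lt]
  | (n+2) => by show m < gA2; unfold m gA2; nlinarith [r_lt]
lemma gA_lt_gB : ∀ s, gAS s < gBS s
  | 0 => by show e2 < gB0; unfold e2 gB0; nlinarith [r_gt]
  | 1 => by show e3 < gB1; unfold e3 gB1; nlinarith [r_gt]
  | (n+2) => by show gA2 < gB2; unfold gA2 gB2; nlinarith [r_gt]
lemma gB_lt_e : ∀ s, gBS s < eS s
  | 0 => by show gB0 < e1; unfold gB0 e1; nlinarith [r_gt]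
  | 1 => by show gB1 < e2; unfold gB1 e2; nlinarith [r_lt]
  | (n+2) => by show gB2 < e3; unfold gB2 e3; nlinarith [r_lt]
lemma e_le_e1 : ∀ s, eS s ≤ e1
  | 0 => le_refl _
  | 1 => by show e2 ≤ e1; unfold e2 e1; nlinarith [r_gt]
  | (n+2) => by show e3 ≤ e1; unfold e3 e1; nlinarith [r_gt]
lemma m_lt_e1 : m < e1 := by unfold m e1; nlinarith [r_gt]
lemma m_le_e : ∀ s, m ≤ eS s := fun s =>
  le_of_lt (lt_trans (m_lt_gA s) (lt_trans (gA_lt_gB s) (gB_lt_e s)))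

lemma f1e : (1 + e1)⁻¹ = gB0 :=
  inv_eq_of_mul_eq_one_right (by unfold e1 gB0; linear_combination (4/7) * r_sq)

lemma f1m : (1 + m)⁻¹ = e1 :=
  inv_eq_of_mul_eq_one_right (by unfold m e1; linear_combination 1 * r_sq)

lemma f2e : (2 + e1)⁻¹ = gB1 :=
  inv_eq_of_mul_eq_one_right (by unfold e1 gB1; linear_combination (1/2) * r_sq)

lemma f2m : (2 + m)⁻¹ = e2 :=
  inv_eq_of_mul_eq_one_right (by unfold m e2; linear_combination (-1/7) * r_sq)

lemma f3e : (3 + e1)⁻¹ = gB2 :=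
  inv_eq_of_mul_eq_one_right (by unfold e1 gB2; linear_combination (4/7) * r_sq)

lemma f3m : (3 + m)⁻¹ = e3 :=
  inv_eq_of_mul_eq_one_right (by unfold m e3; linear_combination (-1/23) * r_sq)

lemma f4e : (4 + e1)⁻¹ = m :=
  inv_eq_of_mul_eq_one_right (by unfold e1 m; linear_combination 1 * r_sq)

lemma f4m : (4 + m)⁻¹ = gA2 :=
  inv_eq_of_mul_eq_one_right (by unfold m gA2; linear_combination (-1/47) * r_sq)

lemma minv : m⁻¹ = 4 + e1 :=
  inv_eq_of_mul_eq_one_right (by unfold m e1; linear_combination 1 * r_sq)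

lemma e1inv : e1⁻¹ = 1 + m :=
  inv_eq_of_mul_eq_one_right (by unfold e1 m; linear_combination 1 * r_sq)

lemma R_gap0 (q q' : ℝ) (h0 : 0 ≤ q) (h1 : q ≤ q') :
    ((gB0) - (e2)) * ((q*(m)+q')*(q*(e1)+q')) ≤ (1/4) * ((e1) - (m)) * ((q*(e2)+q')*(q*(gB0)+q')) := by
  obtain ⟨u, hu, rfl⟩ : ∃ u, 0 ≤ u ∧ q' = q + u := ⟨q'-q, by linarith, by ring⟩
  unfold m e2 gB0 e1
  have h1 : r^2*q^2 = 2*q^2 := by rw [r_sq]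
  have h2 : r^2*(q*u) = 2*(q*u) := by rw [r_sq]
  have h3 : r^2*u^2 = 2*u^2 := by rw [r_sq]
  nlinarith [h1, h2, h3, r_gt, r_lt, mul_nonneg h0 h0, mul_nonneg h0 hu, mul_nonneg hu hu,
    mul_nonneg (mul_nonneg h0 h0) (sub_nonneg.2 r_gt.le),
    mul_nonneg (mul_nonneg h0 hu) (sub_nonneg.2 r_gt.le),
    mul_nonneg (mul_nonneg hu hu) (sub_nonneg.2 r_gt.le),
    mul_nonneg (mul_nonneg h0 h0) (sub_nonneg.2 r_lt.le),
    mul_nonneg (mul_nonneg h0 hu) (sub_nonneg.2 r_lt.le),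
    mul_nonneg (mul_nonneg hu hu) (sub_nonneg.2 r_lt.le)]

lemma R_cAge0 (q q' : ℝ) (h0 : 0 ≤ q) (h1 : q ≤ q') :
    (1/4) * ((e1) - (m)) * (q*(e2)+q') ≤ ((e2) - (m)) * (q*(e1)+q') := by
  obtain ⟨u, hu, rfl⟩ : ∃ u, 0 ≤ u ∧ q' = q + u := ⟨q'-q, by linarith, by ring⟩
  unfold m e2 e1
  have h1 : r^2*q^2 = 2*q^2 := by rw [r_sq]
  have h2 : r^2*(q*u) = 2*(q*u) := by rw [r_sq]
  have h3 : r^2*u^2 = 2*u^2 := by rw [r_sq]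
  nlinarith [h1, h2, h3, r_gt, r_lt, mul_nonneg h0 h0, mul_nonneg h0 hu, mul_nonneg hu hu,
    mul_nonneg (mul_nonneg h0 h0) (sub_nonneg.2 r_gt.le),
    mul_nonneg (mul_nonneg h0 hu) (sub_nonneg.2 r_gt.le),
    mul_nonneg (mul_nonneg hu hu) (sub_nonneg.2 r_gt.le),
    mul_nonneg (mul_nonneg h0 h0) (sub_nonneg.2 r_lt.le),
    mul_nonneg (mul_nonneg h0 hu) (sub_nonneg.2 r_lt.le),
    mul_nonneg (mul_nonneg hu hu) (sub_nonneg.2 r_lt.le)]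

lemma R_cBge0 (q q' : ℝ) (h0 : 0 ≤ q) (h1 : q ≤ q') :
    (1/4) * ((e1) - (m)) * (q*(gB0)+q') ≤ ((e1) - (gB0)) * (q*(m)+q') := by
  obtain ⟨u, hu, rfl⟩ : ∃ u, 0 ≤ u ∧ q' = q + u := ⟨q'-q, by linarith, by ring⟩
  unfold m gB0 e1
  have h1 : r^2*q^2 = 2*q^2 := by rw [r_sq]
  have h2 : r^2*(q*u) = 2*(q*u) := by rw [r_sq]
  have h3 : r^2*u^2 = 2*u^2 := by rw [r_sq]
  nlinarith [h1, h2, h3, r_gt, r_lt, mul_nonneg h0 h0, mul_nonneg h0 hu, mul_nonneg hu hu,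
    mul_nonneg (mul_nonneg h0 h0) (sub_nonneg.2 r_gt.le),
    mul_nonneg (mul_nonneg h0 hu) (sub_nonneg.2 r_gt.le),
    mul_nonneg (mul_nonneg hu hu) (sub_nonneg.2 r_gt.le),
    mul_nonneg (mul_nonneg h0 h0) (sub_nonneg.2 r_lt.le),
    mul_nonneg (mul_nonneg h0 hu) (sub_nonneg.2 r_lt.le),
    mul_nonneg (mul_nonneg hu hu) (sub_nonneg.2 r_lt.le)]

lemma R_cAle0 (q q' : ℝ) (h0 : 0 ≤ q) (h1 : q ≤ q') :
    ((e2) - (m)) * (q*(e1)+q') ≤ (13/25) * ((e1) - (m)) * (q*(e2)+q') := by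
  obtain ⟨u, hu, rfl⟩ : ∃ u, 0 ≤ u ∧ q' = q + u := ⟨q'-q, by linarith, by ring⟩
  unfold m e2 e1
  have h1 : r^2*q^2 = 2*q^2 := by rw [r_sq]
  have h2 : r^2*(q*u) = 2*(q*u) := by rw [r_sq]
  have h3 : r^2*u^2 = 2*u^2 := by rw [r_sq]
  nlinarith [h1, h2, h3, r_gt, r_lt, mul_nonneg h0 h0, mul_nonneg h0 hu, mul_nonneg hu hu,
    mul_nonneg (mul_nonneg h0 h0) (sub_nonneg.2 r_gt.le),
    mul_nonneg (mul_nonneg h0 hu) (sub_nonneg.2 r_gt.le),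
    mul_nonneg (mul_nonneg hu hu) (sub_nonneg.2 r_gt.le),
    mul_nonneg (mul_nonneg h0 h0) (sub_nonneg.2 r_lt.le),
    mul_nonneg (mul_nonneg h0 hu) (sub_nonneg.2 r_lt.le),
    mul_nonneg (mul_nonneg hu hu) (sub_nonneg.2 r_lt.le)]

lemma R_cBle0 (q q' : ℝ) (h0 : 0 ≤ q) (h1 : q ≤ q') :
    ((e1) - (gB0)) * (q*(m)+q') ≤ (13/25) * ((e1) - (m)) * (q*(gB0)+q') := by
  obtain ⟨u, hu, rfl⟩ : ∃ u, 0 ≤ u ∧ q' = q + u := ⟨q'-q, by linarith, by ring⟩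
  unfold m gB0 e1
  have h1 : r^2*q^2 = 2*q^2 := by rw [r_sq]
  have h2 : r^2*(q*u) = 2*(q*u) := by rw [r_sq]
  have h3 : r^2*u^2 = 2*u^2 := by rw [r_sq]
  nlinarith [h1, h2, h3, r_gt, r_lt, mul_nonneg h0 h0, mul_nonneg h0 hu, mul_nonneg hu hu,
    mul_nonneg (mul_nonneg h0 h0) (sub_nonneg.2 r_gt.le),
    mul_nonneg (mul_nonneg h0 hu) (sub_nonneg.2 r_gt.le),
    mul_nonneg (mul_nonneg hu hu) (sub_nonneg.2 r_gt.le),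
    mul_nonneg (mul_nonneg h0 h0) (sub_nonneg.2 r_lt.le),
    mul_nonneg (mul_nonneg h0 hu) (sub_nonneg.2 r_lt.le),
    mul_nonneg (mul_nonneg hu hu) (sub_nonneg.2 r_lt.le)]

lemma R_gap1 (q q' : ℝ) (h0 : 0 ≤ q) (h1 : q ≤ q') :
    ((gB1) - (e3)) * ((q*(m)+q')*(q*(e2)+q')) ≤ (1/4) * ((e2) - (m)) * ((q*(e3)+q')*(q*(gB1)+q')) := by
  obtain ⟨u, hu, rfl⟩ : ∃ u, 0 ≤ u ∧ q' = q + u := ⟨q'-q, by linarith, by ring⟩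
  unfold m e3 gB1 e2
  have h1 : r^2*q^2 = 2*q^2 := by rw [r_sq]
  have h2 : r^2*(q*u) = 2*(q*u) := by rw [r_sq]
  have h3 : r^2*u^2 = 2*u^2 := by rw [r_sq]
  nlinarith [h1, h2, h3, r_gt, r_lt, mul_nonneg h0 h0, mul_nonneg h0 hu, mul_nonneg hu hu,
    mul_nonneg (mul_nonneg h0 h0) (sub_nonneg.2 r_gt.le),
    mul_nonneg (mul_nonneg h0 hu) (sub_nonneg.2 r_gt.le),
    mul_nonneg (mul_nonneg hu hu) (sub_nonneg.2 r_gt.le),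
    mul_nonneg (mul_nonneg h0 h0) (sub_nonneg.2 r_lt.le),
    mul_nonneg (mul_nonneg h0 hu) (sub_nonneg.2 r_lt.le),
    mul_nonneg (mul_nonneg hu hu) (sub_nonneg.2 r_lt.le)]

lemma R_cAge1 (q q' : ℝ) (h0 : 0 ≤ q) (h1 : q ≤ q') :
    (1/4) * ((e2) - (m)) * (q*(e3)+q') ≤ ((e3) - (m)) * (q*(e2)+q') := by
  obtain ⟨u, hu, rfl⟩ : ∃ u, 0 ≤ u ∧ q' = q + u := ⟨q'-q, by linarith, by ring⟩
  unfold m e3 e2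
  have h1 : r^2*q^2 = 2*q^2 := by rw [r_sq]
  have h2 : r^2*(q*u) = 2*(q*u) := by rw [r_sq]
  have h3 : r^2*u^2 = 2*u^2 := by rw [r_sq]
  nlinarith [h1, h2, h3, r_gt, r_lt, mul_nonneg h0 h0, mul_nonneg h0 hu, mul_nonneg hu hu,
    mul_nonneg (mul_nonneg h0 h0) (sub_nonneg.2 r_gt.le),
    mul_nonneg (mul_nonneg h0 hu) (sub_nonneg.2 r_gt.le),
    mul_nonneg (mul_nonneg hu hu) (sub_nonneg.2 r_gt.le),
    mul_nonneg (mul_nonneg h0 h0) (sub_nonneg.2 r_lt.le),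
    mul_nonneg (mul_nonneg h0 hu) (sub_nonneg.2 r_lt.le),
    mul_nonneg (mul_nonneg hu hu) (sub_nonneg.2 r_lt.le)]

lemma R_cBge1 (q q' : ℝ) (h0 : 0 ≤ q) (h1 : q ≤ q') :
    (1/4) * ((e2) - (m)) * (q*(gB1)+q') ≤ ((e2) - (gB1)) * (q*(m)+q') := by
  obtain ⟨u, hu, rfl⟩ : ∃ u, 0 ≤ u ∧ q' = q + u := ⟨q'-q, by linarith, by ring⟩
  unfold m gB1 e2
  have h1 : r^2*q^2 = 2*q^2 := by rw [r_sq]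
  have h2 : r^2*(q*u) = 2*(q*u) := by rw [r_sq]
  have h3 : r^2*u^2 = 2*u^2 := by rw [r_sq]
  nlinarith [h1, h2, h3, r_gt, r_lt, mul_nonneg h0 h0, mul_nonneg h0 hu, mul_nonneg hu hu,
    mul_nonneg (mul_nonneg h0 h0) (sub_nonneg.2 r_gt.le),
    mul_nonneg (mul_nonneg h0 hu) (sub_nonneg.2 r_gt.le),
    mul_nonneg (mul_nonneg hu hu) (sub_nonneg.2 r_gt.le),
    mul_nonneg (mul_nonneg h0 h0) (sub_nonneg.2 r_lt.le),
    mul_nonneg (mul_nonneg h0 hu) (sub_nonneg.2 r_lt.le),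
    mul_nonneg (mul_nonneg hu hu) (sub_nonneg.2 r_lt.le)]

lemma R_cAle1 (q q' : ℝ) (h0 : 0 ≤ q) (h1 : q ≤ q') :
    ((e3) - (m)) * (q*(e2)+q') ≤ (13/25) * ((e2) - (m)) * (q*(e3)+q') := by
  obtain ⟨u, hu, rfl⟩ : ∃ u, 0 ≤ u ∧ q' = q + u := ⟨q'-q, by linarith, by ring⟩
  unfold m e3 e2
  have h1 : r^2*q^2 = 2*q^2 := by rw [r_sq]
  have h2 : r^2*(q*u) = 2*(q*u) := by rw [r_sq]
  have h3 : r^2*u^2 = 2*u^2 := by rw [r_sq]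
  nlinarith [h1, h2, h3, r_gt, r_lt, mul_nonneg h0 h0, mul_nonneg h0 hu, mul_nonneg hu hu,
    mul_nonneg (mul_nonneg h0 h0) (sub_nonneg.2 r_gt.le),
    mul_nonneg (mul_nonneg h0 hu) (sub_nonneg.2 r_gt.le),
    mul_nonneg (mul_nonneg hu hu) (sub_nonneg.2 r_gt.le),
    mul_nonneg (mul_nonneg h0 h0) (sub_nonneg.2 r_lt.le),
    mul_nonneg (mul_nonneg h0 hu) (sub_nonneg.2 r_lt.le),
    mul_nonneg (mul_nonneg hu hu) (sub_nonneg.2 r_lt.le)]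

lemma R_cBle1 (q q' : ℝ) (h0 : 0 ≤ q) (h1 : q ≤ q') :
    ((e2) - (gB1)) * (q*(m)+q') ≤ (13/25) * ((e2) - (m)) * (q*(gB1)+q') := by
  obtain ⟨u, hu, rfl⟩ : ∃ u, 0 ≤ u ∧ q' = q + u := ⟨q'-q, by linarith, by ring⟩
  unfold m gB1 e2
  have h1 : r^2*q^2 = 2*q^2 := by rw [r_sq]
  have h2 : r^2*(q*u) = 2*(q*u) := by rw [r_sq]
  have h3 : r^2*u^2 = 2*u^2 := by rw [r_sq]
  nlinarith [h1, h2, h3, r_gt, r_lt, mul_nonneg h0 h0, mul_nonneg h0 hu, mul_nonneg hu hu,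
    mul_nonneg (mul_nonneg h0 h0) (sub_nonneg.2 r_gt.le),
    mul_nonneg (mul_nonneg h0 hu) (sub_nonneg.2 r_gt.le),
    mul_nonneg (mul_nonneg hu hu) (sub_nonneg.2 r_gt.le),
    mul_nonneg (mul_nonneg h0 h0) (sub_nonneg.2 r_lt.le),
    mul_nonneg (mul_nonneg h0 hu) (sub_nonneg.2 r_lt.le),
    mul_nonneg (mul_nonneg hu hu) (sub_nonneg.2 r_lt.le)]

lemma R_gap2 (q q' : ℝ) (h0 : 0 ≤ q) (h1 : q ≤ q') :
    ((gB2) - (gA2)) * ((q*(m)+q')*(q*(e3)+q')) ≤ (1/4) * ((e3) - (m)) * ((q*(gA2)+q')*(q*(gB2)+q')) := by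
  obtain ⟨u, hu, rfl⟩ : ∃ u, 0 ≤ u ∧ q' = q + u := ⟨q'-q, by linarith, by ring⟩
  unfold m gA2 gB2 e3
  have h1 : r^2*q^2 = 2*q^2 := by rw [r_sq]
  have h2 : r^2*(q*u) = 2*(q*u) := by rw [r_sq]
  have h3 : r^2*u^2 = 2*u^2 := by rw [r_sq]
  nlinarith [h1, h2, h3, r_gt, r_lt, mul_nonneg h0 h0, mul_nonneg h0 hu, mul_nonneg hu hu,
    mul_nonneg (mul_nonneg h0 h0) (sub_nonneg.2 r_gt.le),
    mul_nonneg (mul_nonneg h0 hu) (sub_nonneg.2 r_gt.le),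
    mul_nonneg (mul_nonneg hu hu) (sub_nonneg.2 r_gt.le),
    mul_nonneg (mul_nonneg h0 h0) (sub_nonneg.2 r_lt.le),
    mul_nonneg (mul_nonneg h0 hu) (sub_nonneg.2 r_lt.le),
    mul_nonneg (mul_nonneg hu hu) (sub_nonneg.2 r_lt.le)]

lemma R_cAge2 (q q' : ℝ) (h0 : 0 ≤ q) (h1 : q ≤ q') :
    (1/4) * ((e3) - (m)) * (q*(gA2)+q') ≤ ((gA2) - (m)) * (q*(e3)+q') := by
  obtain ⟨u, hu, rfl⟩ : ∃ u, 0 ≤ u ∧ q' = q + u := ⟨q'-q, by linarith, by ring⟩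
  unfold m gA2 e3
  have h1 : r^2*q^2 = 2*q^2 := by rw [r_sq]
  have h2 : r^2*(q*u) = 2*(q*u) := by rw [r_sq]
  have h3 : r^2*u^2 = 2*u^2 := by rw [r_sq]
  nlinarith [h1, h2, h3, r_gt, r_lt, mul_nonneg h0 h0, mul_nonneg h0 hu, mul_nonneg hu hu,
    mul_nonneg (mul_nonneg h0 h0) (sub_nonneg.2 r_gt.le),
    mul_nonneg (mul_nonneg h0 hu) (sub_nonneg.2 r_gt.le),
    mul_nonneg (mul_nonneg hu hu) (sub_nonneg.2 r_gt.le),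
    mul_nonneg (mul_nonneg h0 h0) (sub_nonneg.2 r_lt.le),
    mul_nonneg (mul_nonneg h0 hu) (sub_nonneg.2 r_lt.le),
    mul_nonneg (mul_nonneg hu hu) (sub_nonneg.2 r_lt.le)]

lemma R_cBge2 (q q' : ℝ) (h0 : 0 ≤ q) (h1 : q ≤ q') :
    (1/4) * ((e3) - (m)) * (q*(gB2)+q') ≤ ((e3) - (gB2)) * (q*(m)+q') := by
  obtain ⟨u, hu, rfl⟩ : ∃ u, 0 ≤ u ∧ q' = q + u := ⟨q'-q, by linarith, by ring⟩
  unfold m gB2 e3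
  have h1 : r^2*q^2 = 2*q^2 := by rw [r_sq]
  have h2 : r^2*(q*u) = 2*(q*u) := by rw [r_sq]
  have h3 : r^2*u^2 = 2*u^2 := by rw [r_sq]
  nlinarith [h1, h2, h3, r_gt, r_lt, mul_nonneg h0 h0, mul_nonneg h0 hu, mul_nonneg hu hu,
    mul_nonneg (mul_nonneg h0 h0) (sub_nonneg.2 r_gt.le),
    mul_nonneg (mul_nonneg h0 hu) (sub_nonneg.2 r_gt.le),
    mul_nonneg (mul_nonneg hu hu) (sub_nonneg.2 r_gt.le),
    mul_nonneg (mul_nonneg h0 h0) (sub_nonneg.2 r_lt.le),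
    mul_nonneg (mul_nonneg h0 hu) (sub_nonneg.2 r_lt.le),
    mul_nonneg (mul_nonneg hu hu) (sub_nonneg.2 r_lt.le)]

lemma R_cAle2 (q q' : ℝ) (h0 : 0 ≤ q) (h1 : q ≤ q') :
    ((gA2) - (m)) * (q*(e3)+q') ≤ (13/25) * ((e3) - (m)) * (q*(gA2)+q') := by
  obtain ⟨u, hu, rfl⟩ : ∃ u, 0 ≤ u ∧ q' = q + u := ⟨q'-q, by linarith, by ring⟩
  unfold m gA2 e3
  have h1 : r^2*q^2 = 2*q^2 := by rw [r_sq]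
  have h2 : r^2*(q*u) = 2*(q*u) := by rw [r_sq]
  have h3 : r^2*u^2 = 2*u^2 := by rw [r_sq]
  nlinarith [h1, h2, h3, r_gt, r_lt, mul_nonneg h0 h0, mul_nonneg h0 hu, mul_nonneg hu hu,
    mul_nonneg (mul_nonneg h0 h0) (sub_nonneg.2 r_gt.le),
    mul_nonneg (mul_nonneg h0 hu) (sub_nonneg.2 r_gt.le),
    mul_nonneg (mul_nonneg hu hu) (sub_nonneg.2 r_gt.le),
    mul_nonneg (mul_nonneg h0 h0) (sub_nonneg.2 r_lt.le),
    mul_nonneg (mul_nonneg h0 hu) (sub_nonneg.2 r_lt.le),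
    mul_nonneg (mul_nonneg hu hu) (sub_nonneg.2 r_lt.le)]

lemma R_cBle2 (q q' : ℝ) (h0 : 0 ≤ q) (h1 : q ≤ q') :
    ((e3) - (gB2)) * (q*(m)+q') ≤ (13/25) * ((e3) - (m)) * (q*(gB2)+q') := by
  obtain ⟨u, hu, rfl⟩ : ∃ u, 0 ≤ u ∧ q' = q + u := ⟨q'-q, by linarith, by ring⟩
  unfold m gB2 e3
  have h1 : r^2*q^2 = 2*q^2 := by rw [r_sq]
  have h2 : r^2*(q*u) = 2*(q*u) := by rw [r_sq]
  have h3 : r^2*u^2 = 2*u^2 := by rw [r_sq]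
  nlinarith [h1, h2, h3, r_gt, r_lt, mul_nonneg h0 h0, mul_nonneg h0 hu, mul_nonneg hu hu,
    mul_nonneg (mul_nonneg h0 h0) (sub_nonneg.2 r_gt.le),
    mul_nonneg (mul_nonneg h0 hu) (sub_nonneg.2 r_gt.le),
    mul_nonneg (mul_nonneg hu hu) (sub_nonneg.2 r_gt.le),
    mul_nonneg (mul_nonneg h0 h0) (sub_nonneg.2 r_lt.le),
    mul_nonneg (mul_nonneg h0 hu) (sub_nonneg.2 r_lt.le),
    mul_nonneg (mul_nonneg hu hu) (sub_nonneg.2 r_lt.le)]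

end HallP

-- Section 2: Möbius machinery
namespace HallP

def fstep (k : ℕ) (u : ℝ) : ℝ := ((k:ℝ) + u)⁻¹

def mob (L : List ℕ) (t : ℝ) : ℝ := L.foldr fstep t

lemma mob_nil (t : ℝ) : mob [] t = t := rfl
lemma mob_cons (k : ℕ) (L : List ℕ) (t : ℝ) : mob (k :: L) t = ((k:ℝ) + mob L t)⁻¹ := rfl
lemma mob_append (L : List ℕ) (k : ℕ) (t : ℝ) :
    mob (L ++ [k]) t = mob L (((k:ℝ) + t)⁻¹) := by
  unfold mob; rw [List.foldr_append]; rfl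

def goodL (L : List ℕ) : Prop := ∀ k ∈ L, 1 ≤ k ∧ k ≤ 4

lemma goodL_nil : goodL [] := by intro k hk; cases hk
lemma goodL_cons {k L} (h : goodL (k :: L)) : goodL L := fun j hj => h j (List.mem_cons_of_mem _ hj)
lemma goodL_head {k L} (h : goodL (k :: L)) : 1 ≤ k ∧ k ≤ 4 := h k List.mem_cons_self
lemma goodL_append {L k} (h : goodL L) (h1 : 1 ≤ k) (h2 : k ≤ 4) : goodL (L ++ [k]) := by
  intro j hj
  rcases List.mem_append.1 hj with h' | h'
  · exact h j h'
  · rcases List.mem_singleton.1 h' with rfl; exact ⟨h1, h2⟩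

lemma mob_mem {L : List ℕ} (hL : goodL L) {t : ℝ} (ht : t ∈ Set.Icc (0:ℝ) 1) :
    mob L t ∈ Set.Icc (0:ℝ) 1 := by
  induction L with
  | nil => exact ht
  | cons k L ih =>
    have h' := ih (goodL_cons hL)
    have hk' : (1:ℝ) ≤ (k:ℝ) := by exact_mod_cast (goodL_head hL).1
    have hpos : (0:ℝ) < (k:ℝ) + mob L t := by linarith [h'.1]
    rw [mob_cons]
    refine ⟨by positivity, ?_⟩
    rw [inv_le_one_iff₀]; right; linarith [h'.1]

structure CF where
  p : ℝ
  p' : ℝ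
  q : ℝ
  q' : ℝ

def cf : List ℕ → CF
  | [] => ⟨1, 0, 0, 1⟩
  | k :: L => ⟨(cf L).q, (cf L).q', (cf L).p + k * (cf L).q, (cf L).p' + k * (cf L).q'⟩

lemma cf_inv {L : List ℕ} (hL : goodL L) :
    0 ≤ (cf L).p ∧ 0 ≤ (cf L).p' ∧ 0 ≤ (cf L).q ∧ 0 < (cf L).q' ∧
      (cf L).q ≤ (cf L).q' ∧ (cf L).p + (cf L).q ≤ (cf L).p' + (cf L).q' := by
  induction L with
  | nil => norm_num [cf]
  | cons k L ih =>
    obtain ⟨h1, h2, h3, h4, h5, h6⟩ := ih (goodL_cons hL)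
    have hk : (1:ℝ) ≤ (k:ℝ) := by exact_mod_cast (goodL_head hL).1
    refine ⟨h3, h4.le, by simp only [cf]; positivity, ?_, ?_, ?_⟩ <;> simp only [cf]
    · nlinarith
    · nlinarith
    · nlinarith

def detL (L : List ℕ) : ℝ := (cf L).p * (cf L).q' - (cf L).p' * (cf L).q

lemma detL_cases (L : List ℕ) : detL L = 1 ∨ detL L = -1 := by
  induction L with
  | nil => left; norm_num [detL, cf]
  | cons k L ih =>
    rcases ih with h | h
    · right; simp only [detL, cf] at h ⊢; nlinarith
    · left; simp only [detL, cf] at h ⊢; nlinarith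

lemma denom_pos {L : List ℕ} (hL : goodL L) {t : ℝ} (ht : 0 ≤ t) :
    0 < (cf L).q * t + (cf L).q' := by
  obtain ⟨_, _, h3, h4, _, _⟩ := cf_inv hL
  nlinarith

lemma mob_eq {L : List ℕ} (hL : goodL L) {t : ℝ} (ht : 0 ≤ t) :
    mob L t = ((cf L).p * t + (cf L).p') / ((cf L).q * t + (cf L).q') := by
  induction L with
  | nil => simp [mob_nil, cf]
  | cons k L ih =>
    have hd := denom_pos (goodL_cons hL) ht
    rw [mob_cons, ih (goodL_cons hL)]
    have hx : (k:ℝ) + ((cf L).p * t + (cf L).p') / ((cf L).q * t + (cf L).q')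
        = (((cf L).p + k * (cf L).q) * t + ((cf L).p' + k * (cf L).q'))
            / ((cf L).q * t + (cf L).q') := by
      rw [eq_div_iff hd.ne', add_mul, div_mul_cancel₀ _ hd.ne']; ring
    rw [hx, inv_div]
    simp only [cf]

/-- length weight of the image of `[a,b]` under `mob L`. -/
def W (L : List ℕ) (a b : ℝ) : ℝ :=
  (b - a) / (((cf L).q * a + (cf L).q') * ((cf L).q * b + (cf L).q'))

lemma W_pos {L : List ℕ} (hL : goodL L) {a b : ℝ} (ha : 0 ≤ a) (hb : 0 ≤ b) (hab : a < b) :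
    0 < W L a b := by
  have d1 := denom_pos hL ha
  have d2 := denom_pos hL hb
  exact div_pos (by linarith) (mul_pos d1 d2)

lemma mob_sub {L : List ℕ} (hL : goodL L) {a b : ℝ} (ha : 0 ≤ a) (hb : 0 ≤ b) :
    mob L b - mob L a = detL L * W L a b := by
  have d1 := denom_pos hL ha
  have d2 := denom_pos hL hb
  rw [mob_eq hL ha, mob_eq hL hb]
  unfold detL W
  rw [div_sub_div _ _ d2.ne' d1.ne', mul_div_assoc', div_eq_div_iff (mul_ne_zero d2.ne' d1.ne') (mul_ne_zero d1.ne' d2.ne')]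
  ring

lemma mob_contOn {L : List ℕ} (hL : goodL L) : ContinuousOn (mob L) (Set.Icc 0 1) := by
  induction L with
  | nil => exact continuousOn_id
  | cons k L ih =>
    have h' := ih (goodL_cons hL)
    have hk : (1:ℝ) ≤ (k:ℝ) := by exact_mod_cast (goodL_head hL).1
    have : ContinuousOn (fun t => ((k:ℝ) + mob L t)) (Set.Icc 0 1) :=
      continuousOn_const.add h'
    exact ContinuousOn.inv₀ this (fun t ht => ne_of_gt (by
      show (0:ℝ) < (k:ℝ) + mob L t
      have := (mob_mem (goodL_cons hL) ht).1
      linarith))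

lemma mob_surj {L : List ℕ} (hL : goodL L) {a b : ℝ} (ha : 0 ≤ a) (hab : a ≤ b) (hb : b ≤ 1)
    {x : ℝ} (hx : x ∈ Set.uIcc (mob L a) (mob L b)) :
    ∃ t ∈ Set.Icc a b, mob L t = x := by
  have hsub : Set.uIcc a b ⊆ Set.Icc (0:ℝ) 1 := by
    rw [Set.uIcc_of_le hab]
    exact Set.Icc_subset_Icc ha hb
  have := intermediate_value_uIcc ((mob_contOn hL).mono hsub) hx
  obtain ⟨t, ht, hmt⟩ := this
  exact ⟨t, by rwa [Set.uIcc_of_le hab] at ht, hmt⟩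

end HallP

-- Section 3: Gauss map chain lemmas
namespace HallP

lemma gauss_step {k : ℕ} (hk1 : 1 ≤ k) (hk4 : k ≤ 4) {t : ℝ} (ht : t ∈ Set.Icc m e1) :
    (((k:ℝ) + t)⁻¹)⁻¹ = (k:ℝ) + t ∧ ⌊((k:ℝ) + t)⌋ = (k:ℤ) ∧ gaussMap (((k:ℝ) + t)⁻¹) = t := by
  have hm := m_pos
  have he := e1_lt_one
  have ht0 : 0 < t := lt_of_lt_of_le hm ht.1
  have ht1 : t < 1 := lt_of_le_of_lt ht.2 he
  have hfl : ⌊((k:ℝ) + t)⌋ = (k:ℤ) := by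
    rw [add_comm, Int.floor_add_natCast, Int.floor_eq_zero_iff.2 ⟨ht0.le, ht1⟩]
    simp
  refine ⟨inv_inv _, hfl, ?_⟩
  rw [gaussMap, inv_inv, Int.fract, hfl]
  push_cast
  ring

lemma mob_mem_J {L : List ℕ} (hL : goodL L) {t : ℝ} (ht : t ∈ Set.Icc m e1) :
    mob L t ∈ Set.Icc m e1 := by
  induction L with
  | nil => exact ht
  | cons k L ih =>
    have h' := ih (goodL_cons hL)
    obtain ⟨hk1, hk4⟩ := goodL_head hL
    have hk1' : (1:ℝ) ≤ (k:ℝ) := by exact_mod_cast hk1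
    have hk4' : (k:ℝ) ≤ 4 := by exact_mod_cast hk4
    have hm := m_pos
    have hu0 : 0 < (k:ℝ) + mob L t := by linarith [h'.1]
    rw [mob_cons]
    have h4pos : (0:ℝ) < 4 + e1 := by unfold e1; nlinarith [r_gt]
    have h1pos : (0:ℝ) < 1 + m := by linarith
    constructor
    · rw [← f4e, inv_le_inv₀ h4pos hu0]
      linarith [h'.2]
    · rw [← f1m, inv_le_inv₀ hu0 h1pos]
      linarith [h'.1]

lemma chain_mem {L : List ℕ} (hL : goodL L) {t : ℝ} (ht : t ∈ Set.Icc m e1) :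
    ∀ j, j ≤ L.length → gaussMap^[j] (mob L t) = mob (L.drop j) t := by
  induction L with
  | nil =>
    intro j hj
    have : j = 0 := Nat.le_zero.mp (by simpa using hj)
    subst this
    simp
  | cons k L ih =>
    intro j hj
    match j with
    | 0 => simp
    | (j+1) =>
      have hstep := gauss_step (goodL_head hL).1 (goodL_head hL).2
        (mob_mem_J (goodL_cons hL) ht)
      rw [Function.iterate_succ_apply, mob_cons, hstep.2.2]
      exact ih (goodL_cons hL) j (by simpa using hj)

lemma chain_floor {L : List ℕ} (hL : goodL L) {t : ℝ} (ht : t ∈ Set.Icc m e1)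
    {j : ℕ} (hj : j < L.length) :
    ⌊(gaussMap^[j] (mob L t))⁻¹⌋ ≤ (4:ℤ) ∧ gaussMap^[j] (mob L t) ∈ Set.Icc m e1 := by
  have h1 := chain_mem hL ht j hj.le
  have hdrop : L.drop j = L[j] :: L.drop (j+1) := List.drop_eq_getElem_cons hj
  have hgd : goodL (L.drop j) := fun a ha => hL a (List.mem_of_mem_drop ha)
  have hmem : gaussMap^[j] (mob L t) ∈ Set.Icc m e1 := by
    rw [h1]; exact mob_mem_J hgd ht
  refine ⟨?_, hmem⟩
  have hgd2 : goodL (L[j] :: L.drop (j+1)) := by rw [← hdrop]; exact hgd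
  obtain ⟨hk1, hk4⟩ := goodL_head hgd2
  have hu := mob_mem_J (goodL_cons hgd2) ht
  have hs := gauss_step hk1 hk4 hu
  rw [h1, hdrop, mob_cons, hs.1, hs.2.1]
  exact_mod_cast hk4

end HallP
-- irrationality via denominator descent
namespace HallP

lemma no_rat : ∀ d : ℕ, 0 < d → ∀ x : ℝ, (∀ j, gaussMap^[j] x ∈ Set.Ioo (0:ℝ) 1) →
    ∀ z : ℤ, x * d = z → False := by
  intro d
  induction d using Nat.strong_induction_on with
  | _ d ih =>
    intro hd x hx z hz
    have hx0 : x ∈ Set.Ioo (0:ℝ) 1 := by have := hx 0; simpa using this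
    have hd' : (0:ℝ) < d := by exact_mod_cast hd
    have hz0 : 0 < z := by
      have : (0:ℝ) < (z:ℝ) := by rw [← hz]; exact mul_pos hx0.1 hd'
      exact_mod_cast this
    have hzd : z < d := by
      have : (z:ℝ) < (d:ℝ) := by rw [← hz]; nlinarith [hx0.2]
      exact_mod_cast this
    have hxne : x ≠ 0 := ne_of_gt hx0.1
    have hinv : x⁻¹ * z = d := by
      have : (z:ℝ) = x * d := hz.symm
      rw [this]
      field_simp
    -- gaussMap x * z is an integer
    have hg : gaussMap x * z = ((d:ℤ) - ⌊x⁻¹⌋ * z : ℤ) := by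
      rw [gaussMap, Int.fract]
      push_cast
      rw [sub_mul, hinv]
    have hz1 : z.toNat < d := by omega
    have hz2 : 0 < z.toNat := by omega
    refine ih z.toNat hz1 hz2 (gaussMap x) (fun j => ?_) ((d:ℤ) - ⌊x⁻¹⌋ * z) ?_
    · have := hx (j+1)
      rwa [Function.iterate_succ_apply] at this
    · rw [show ((z.toNat : ℕ) : ℝ) = (z : ℝ) by
        rw [← Int.cast_natCast]; congr 1; omega]
      exact hg

lemma irrational_of_orbit {x : ℝ} (h : ∀ j, gaussMap^[j] x ∈ Set.Ioo (0:ℝ) 1) :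
    Irrational x := by
  rw [Irrational]
  intro hmem
  obtain ⟨q, hq⟩ := hmem
  have hden : (0:ℕ) < q.den := q.pos
  refine no_rat q.den hden x h q.num ?_
  have hden' : ((q.den:ℝ)) ≠ 0 := by exact_mod_cast hden.ne'
  have hcast : ((q:ℝ)) = (q.num:ℝ)/(q.den:ℝ) := by rw [Rat.cast_def]
  rw [← hq, hcast, div_mul_cancel₀ _ hden']

lemma Icc_sub_Ioo : Set.Icc m e1 ⊆ Set.Ioo (0:ℝ) 1 :=
  fun t ht => ⟨lt_of_lt_of_le m_pos ht.1, lt_of_le_of_lt ht.2 e1_lt_one⟩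

/-- main membership criterion -/
lemma mem_C4 {x : ℝ}
    (h : ∀ n : ℕ, ∃ L : List ℕ, goodL L ∧ n ≤ L.length ∧ ∃ t ∈ Set.Icc m e1, mob L t = x) :
    x ∈ cantorSetCF 4 := by
  have horbit : ∀ j, gaussMap^[j] x ∈ Set.Icc m e1 := by
    intro j
    obtain ⟨L, hL, hlen, t, ht, hx⟩ := h (j+1)
    rw [← hx]
    exact (chain_floor hL ht (lt_of_lt_of_le (Nat.lt_succ_self j) hlen)).2
  refine ⟨?_, ?_, ?_⟩
  · have := horbit 0; simp only [Function.iterate_zero, id] at this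
    exact Icc_sub_Ioo this
  · exact irrational_of_orbit (fun j => Icc_sub_Ioo (horbit j))
  · intro n
    obtain ⟨L, hL, hlen, t, ht, hx⟩ := h (n+1)
    rw [← hx]
    exact_mod_cast (chain_floor hL ht (lt_of_lt_of_le (Nat.lt_succ_self n) hlen)).1

end HallP

-- Section 4: easy direction, C4 ⊆ [m, e1]
namespace HallP

lemma C4_basic {x : ℝ} (hx : x ∈ cantorSetCF 4) :
    gaussMap x ∈ cantorSetCF 4 ∧ x⁻¹ = ⌊x⁻¹⌋ + gaussMap x ∧ 1 ≤ ⌊x⁻¹⌋ ∧ ⌊x⁻¹⌋ ≤ 4 := by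
  obtain ⟨⟨hx0, hx1⟩, hirr, hfl⟩ := hx
  have hinv1 : 1 < x⁻¹ := (one_lt_inv₀ hx0).2 hx1
  have hfl1 : 1 ≤ ⌊x⁻¹⌋ := by
    rw [Int.le_floor]; exact_mod_cast hinv1.le
  have hinv_irr : Irrational x⁻¹ := hirr.inv
  have hg_irr : Irrational (gaussMap x) := by
    rw [gaussMap, Int.fract]
    exact hinv_irr.sub_intCast _
  have hg0 : 0 < gaussMap x :=
    lt_of_le_of_ne (Int.fract_nonneg _) (Ne.symm hg_irr.ne_zero)
  have hg1 : gaussMap x < 1 := Int.fract_lt_one _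
  have hfrac : x⁻¹ = ⌊x⁻¹⌋ + gaussMap x := by
    rw [gaussMap, Int.fract]; ring
  refine ⟨⟨⟨hg0, hg1⟩, hg_irr, ?_⟩, hfrac, hfl1, by have := hfl 0; simpa using this⟩
  intro n
  have := hfl (n+1)
  rwa [Function.iterate_succ_apply] at this

lemma C4_lb : ∀ n : ℕ, ∀ ε : ℝ, 0 < ε → m ≤ 2^n * ε → ∀ x ∈ cantorSetCF 4, m - ε ≤ x := by
  intro n
  induction n with
  | zero =>
    intro ε hε h x hx
    have := hx.1.1
    simp only [pow_zero, one_mul] at h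
    linarith
  | succ n ih =>
    intro ε hε h x hx
    by_cases hεm : m ≤ ε
    · linarith [hx.1.1]
    push_neg at hεm
    by_contra hcon
    push_neg at hcon
    have hmε : (0:ℝ) < m - ε := by linarith
    have hx0 : 0 < x := hx.1.1
    obtain ⟨hgx, hfrac, hfl1, hfl4⟩ := C4_basic hx
    obtain ⟨hggx, hfrac2, hfl1', _⟩ := C4_basic hgx
    have hxinv : (m - ε)⁻¹ < x⁻¹ := (inv_lt_inv₀ hmε hx0).2 hcon
    have hfl4' : ((⌊x⁻¹⌋:ℝ)) ≤ 4 := by exact_mod_cast hfl4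
    have hfl1r : (1:ℝ) ≤ ((⌊(gaussMap x)⁻¹⌋:ℝ)) := by exact_mod_cast hfl1'
    have hGx_lo : x⁻¹ - 4 ≤ gaussMap x := by linarith [hfrac]
    have poly1 : (4 + e1 + 12*ε) * (m - ε) ≤ 1 := by
      unfold m at hεm
      unfold m e1
      nlinarith [r_sq, r_gt, r_lt, hε, hεm, mul_pos hε hε,
        mul_nonneg hε.le (sub_nonneg.2 r_gt.le), mul_nonneg hε.le (sub_nonneg.2 r_lt.le)]
    have key1 : 4 + e1 + 12*ε ≤ (m - ε)⁻¹ := by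
      rw [inv_eq_one_div, le_div_iff₀ hmε]
      linarith
    have hy_lo : e1 + 12*ε < gaussMap x := by linarith
    have hy0 : (0:ℝ) < e1 + 12*ε := by
      have := m_pos; have := m_lt_e1; linarith
    have hyinv : (gaussMap x)⁻¹ < (e1 + 12*ε)⁻¹ := (inv_lt_inv₀ (by linarith) hy0).2 hy_lo
    have poly2 : 1 ≤ (1 + m - 2*ε) * (e1 + 12*ε) := by
      unfold m at hεm
      unfold m e1
      nlinarith [r_sq, r_gt, r_lt, hε, hεm, mul_pos hε hε,
        mul_nonneg hε.le (sub_nonneg.2 r_gt.le), mul_nonneg hε.le (sub_nonneg.2 r_lt.le)]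
    have key2 : (e1 + 12*ε)⁻¹ ≤ 1 + m - 2*ε := by
      rw [inv_eq_one_div, div_le_iff₀ hy0]
      linarith
    have hGy_hi : gaussMap (gaussMap x) ≤ (gaussMap x)⁻¹ - 1 := by linarith [hfrac2]
    have hIH : m - 2*ε ≤ gaussMap (gaussMap x) := by
      apply ih (2*ε) (by linarith) ?_ _ hggx
      calc m ≤ 2^(n+1) * ε := h
      _ = 2^n * (2*ε) := by ring
    linarith

lemma C4_ge {x : ℝ} (hx : x ∈ cantorSetCF 4) : m ≤ x := by
  by_contra hcon
  push_neg at hcon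
  set ε := (m - x)/2 with hε
  have hε0 : 0 < ε := by simp only [hε]; linarith
  obtain ⟨n, hn⟩ := pow_unbounded_of_one_lt (m/ε) (one_lt_two (α := ℝ))
  have hx' := C4_lb n ε hε0 (by
    rw [div_lt_iff₀ hε0] at hn
    linarith) x hx
  simp only [hε] at hx'
  linarith

lemma C4_le {x : ℝ} (hx : x ∈ cantorSetCF 4) : x ≤ e1 := by
  by_contra hcon
  push_neg at hcon
  obtain ⟨hgx, hfrac, hfl1, hfl4⟩ := C4_basic hx
  have he1 : 0 < e1 := lt_trans m_pos m_lt_e1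
  have hxinv : x⁻¹ < e1⁻¹ := (inv_lt_inv₀ (lt_trans he1 hcon) he1).2 hcon
  rw [e1inv] at hxinv
  have hfl1r : (1:ℝ) ≤ ((⌊x⁻¹⌋:ℝ)) := by exact_mod_cast hfl1
  have := C4_ge hgx
  linarith

end HallP

-- Section 5: nodes and the split/refine lemmas
namespace HallP

lemma Rw_gap (s : ℕ) (q q' : ℝ) (h0 : 0 ≤ q) (h1 : q ≤ q') :
    (gBS s - gAS s) * ((q*m+q')*(q*(eS s)+q')) ≤ (1/4) * ((eS s) - m) * ((q*(gAS s)+q')*(q*(gBS s)+q')) :=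
  match s with
  | 0 => R_gap0 q q' h0 h1
  | 1 => R_gap1 q q' h0 h1
  | (_+2) => R_gap2 q q' h0 h1

lemma Rw_cAge (s : ℕ) (q q' : ℝ) (h0 : 0 ≤ q) (h1 : q ≤ q') :
    (1/4) * ((eS s) - m) * (q*(gAS s)+q') ≤ ((gAS s) - m) * (q*(eS s)+q') :=
  match s with
  | 0 => R_cAge0 q q' h0 h1
  | 1 => R_cAge1 q q' h0 h1
  | (_+2) => R_cAge2 q q' h0 h1

lemma Rw_cBge (s : ℕ) (q q' : ℝ) (h0 : 0 ≤ q) (h1 : q ≤ q') :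
    (1/4) * ((eS s) - m) * (q*(gBS s)+q') ≤ ((eS s) - (gBS s)) * (q*m+q') :=
  match s with
  | 0 => R_cBge0 q q' h0 h1
  | 1 => R_cBge1 q q' h0 h1
  | (_+2) => R_cBge2 q q' h0 h1

lemma Rw_cAle (s : ℕ) (q q' : ℝ) (h0 : 0 ≤ q) (h1 : q ≤ q') :
    ((gAS s) - m) * (q*(eS s)+q') ≤ (13/25) * ((eS s) - m) * (q*(gAS s)+q') :=
  match s with
  | 0 => R_cAle0 q q' h0 h1
  | 1 => R_cAle1 q q' h0 h1
  | (_+2) => R_cAle2 q q' h0 h1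

lemma Rw_cBle (s : ℕ) (q q' : ℝ) (h0 : 0 ≤ q) (h1 : q ≤ q') :
    ((eS s) - (gBS s)) * (q*m+q') ≤ (13/25) * ((eS s) - m) * (q*(gBS s)+q') :=
  match s with
  | 0 => R_cBle0 q q' h0 h1
  | 1 => R_cBle1 q q' h0 h1
  | (_+2) => R_cBle2 q q' h0 h1

lemma Wdiv_le {A B c C D : ℝ} (hB : 0 < B) (hD : 0 < D) (h : A * D ≤ (c * C) * B) :
    A / B ≤ c * (C / D) := by
  rw [← mul_div_assoc, div_le_div_iff₀ hB hD]
  exact h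

lemma Wdiv_ge {A B c C D : ℝ} (hB : 0 < B) (hD : 0 < D) (h : (c * C) * B ≤ A * D) :
    c * (C / D) ≤ A / B := by
  rw [← mul_div_assoc, div_le_div_iff₀ hD hB]
  exact h

lemma dpos {L : List ℕ} (hL : goodL L) (t : ℝ) (ht : 0 ≤ t) :
    0 < (cf L).q * t + (cf L).q' := denom_pos hL ht

lemma shape_pts (s : ℕ) : 0 < m ∧ m < gAS s ∧ gAS s < gBS s ∧ gBS s < eS s ∧ eS s ≤ e1 :=
  ⟨m_pos, m_lt_gA s, gA_lt_gB s, gB_lt_e s, e_le_e1 s⟩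

lemma Wle_gap {L : List ℕ} (hL : goodL L) (s : ℕ) :
    W L (gAS s) (gBS s) ≤ (1/4) * W L m (eS s) := by
  obtain ⟨hm, h1, h2, h3, _⟩ := shape_pts s
  have d0 := dpos hL m hm.le
  have d1 := dpos hL (gAS s) (by linarith)
  have d2 := dpos hL (gBS s) (by linarith)
  have d3 := dpos hL (eS s) (by linarith)
  obtain ⟨_, _, hq, hq', hqq, _⟩ := cf_inv hL
  unfold W
  apply Wdiv_le (mul_pos d1 d2) (mul_pos d0 d3)
  nlinarith [Rw_gap s (cf L).q (cf L).q' hq hqq]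

lemma Wge_cA {L : List ℕ} (hL : goodL L) (s : ℕ) :
    (1/4) * W L m (eS s) ≤ W L m (gAS s) := by
  obtain ⟨hm, h1, h2, h3, _⟩ := shape_pts s
  have d0 := dpos hL m hm.le
  have d1 := dpos hL (gAS s) (by linarith)
  have d3 := dpos hL (eS s) (by linarith)
  unfold W
  obtain ⟨_, _, hq, hq', hqq, _⟩ := cf_inv hL
  apply Wdiv_ge (mul_pos d0 d1) (mul_pos d0 d3)
  nlinarith [Rw_cAge s (cf L).q (cf L).q' hq hqq, d0, d1, d3]

lemma Wge_cB {L : List ℕ} (hL : goodL L) (s : ℕ) :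
    (1/4) * W L m (eS s) ≤ W L (gBS s) (eS s) := by
  obtain ⟨hm, h1, h2, h3, _⟩ := shape_pts s
  have d0 := dpos hL m hm.le
  have d2 := dpos hL (gBS s) (by linarith)
  have d3 := dpos hL (eS s) (by linarith)
  unfold W
  obtain ⟨_, _, hq, hq', hqq, _⟩ := cf_inv hL
  apply Wdiv_ge (mul_pos d2 d3) (mul_pos d0 d3)
  nlinarith [Rw_cBge s (cf L).q (cf L).q' hq hqq, d0, d2, d3]

lemma Wle_cA {L : List ℕ} (hL : goodL L) (s : ℕ) :
    W L m (gAS s) ≤ (13/25) * W L m (eS s) := by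
  obtain ⟨hm, h1, h2, h3, _⟩ := shape_pts s
  have d0 := dpos hL m hm.le
  have d1 := dpos hL (gAS s) (by linarith)
  have d3 := dpos hL (eS s) (by linarith)
  unfold W
  obtain ⟨_, _, hq, hq', hqq, _⟩ := cf_inv hL
  apply Wdiv_le (mul_pos d0 d1) (mul_pos d0 d3)
  nlinarith [Rw_cAle s (cf L).q (cf L).q' hq hqq, d0, d1, d3]

lemma Wle_cB {L : List ℕ} (hL : goodL L) (s : ℕ) :
    W L (gBS s) (eS s) ≤ (13/25) * W L m (eS s) := by
  obtain ⟨hm, h1, h2, h3, _⟩ := shape_pts s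
  have d0 := dpos hL m hm.le
  have d2 := dpos hL (gBS s) (by linarith)
  have d3 := dpos hL (eS s) (by linarith)
  unfold W
  obtain ⟨_, _, hq, hq', hqq, _⟩ := cf_inv hL
  apply Wdiv_le (mul_pos d2 d3) (mul_pos d0 d3)
  nlinarith [Rw_cBle s (cf L).q (cf L).q' hq hqq, d0, d2, d3]

def nlo (N : List ℕ × ℕ) : ℝ := min (mob N.1 m) (mob N.1 (eS N.2))
def nhi (N : List ℕ × ℕ) : ℝ := max (mob N.1 m) (mob N.1 (eS N.2))
def rank (N : List ℕ × ℕ) : ℕ := 3 * N.1.length + N.2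

def children : List ℕ × ℕ → (List ℕ × ℕ) × (List ℕ × ℕ)
  | (L, 0) => ((L, 1), (L ++ [1], 0))
  | (L, 1) => ((L, 2), (L ++ [2], 0))
  | (L, _) => ((L ++ [4], 0), (L ++ [3], 0))

lemma children_spec {L : List ℕ} {s : ℕ} (hgood : goodL L) (hs : s ≤ 2) :
    goodL (children (L,s)).1.1 ∧ (children (L,s)).1.2 ≤ 2 ∧
    goodL (children (L,s)).2.1 ∧ (children (L,s)).2.2 ≤ 2 ∧
    rank (L,s) + 1 ≤ rank (children (L,s)).1 ∧ rank (L,s) + 1 ≤ rank (children (L,s)).2 ∧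
    nlo (children (L,s)).1 = min (mob L m) (mob L (gAS s)) ∧
    nhi (children (L,s)).1 = max (mob L m) (mob L (gAS s)) ∧
    nlo (children (L,s)).2 = min (mob L (gBS s)) (mob L (eS s)) ∧
    nhi (children (L,s)).2 = max (mob L (gBS s)) (mob L (eS s)) := by
  have hlen : (∀ k : ℕ, (L ++ [k]).length = L.length + 1) := fun k => by simp
  interval_cases s
  · -- s = 0
    simp only [show children (L,0) = ((L,1),(L++[1],0)) from rfl]
    refine ⟨hgood, by norm_num, goodL_append hgood (by norm_num) (by norm_num), by norm_num, ?_, ?_, ?_, ?_, ?_, ?_⟩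
    · show 3 * L.length + 0 + 1 ≤ 3 * L.length + 1
      omega
    · show 3 * L.length + 0 + 1 ≤ 3 * (L++[1]).length + 0
      rw [hlen]; omega
    · rfl
    · rfl
    · show min (mob (L++[1]) m) (mob (L++[1]) e1) = min (mob L gB0) (mob L e1)
      rw [mob_append, mob_append]
      push_cast
      rw [f1m, f1e]
      exact min_comm _ _
    · show max (mob (L++[1]) m) (mob (L++[1]) e1) = max (mob L gB0) (mob L e1)
      rw [mob_append, mob_append]
      push_cast
      rw [f1m, f1e]
      exact max_comm _ _
  · -- s = 1
    simp only [show children (L,1) = ((L,2),(L++[2],0)) from rfl]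
    refine ⟨hgood, by norm_num, goodL_append hgood (by norm_num) (by norm_num), by norm_num, ?_, ?_, ?_, ?_, ?_, ?_⟩
    · show 3 * L.length + 1 + 1 ≤ 3 * L.length + 2
      omega
    · show 3 * L.length + 1 + 1 ≤ 3 * (L++[2]).length + 0
      rw [hlen]; omega
    · rfl
    · rfl
    · show min (mob (L++[2]) m) (mob (L++[2]) e1) = min (mob L gB1) (mob L e2)
      rw [mob_append, mob_append]
      push_cast
      rw [f2m, f2e]
      exact min_comm _ _
    · show max (mob (L++[2]) m) (mob (L++[2]) e1) = max (mob L gB1) (mob L e2)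
      rw [mob_append, mob_append]
      push_cast
      rw [f2m, f2e]
      exact max_comm _ _
  · -- s = 2
    simp only [show children (L,2) = ((L++[4],0),(L++[3],0)) from rfl]
    refine ⟨goodL_append hgood (by norm_num) (by norm_num), by norm_num, goodL_append hgood (by norm_num) (by norm_num), by norm_num, ?_, ?_, ?_, ?_, ?_, ?_⟩
    · show 3 * L.length + 2 + 1 ≤ 3 * (L++[4]).length + 0
      rw [hlen]; omega
    · show 3 * L.length + 2 + 1 ≤ 3 * (L++[3]).length + 0
      rw [hlen]; omega
    · show min (mob (L++[4]) m) (mob (L++[4]) e1) = min (mob L m) (mob L gA2)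
      rw [mob_append, mob_append]
      push_cast
      rw [f4m, f4e]
      exact min_comm _ _
    · show max (mob (L++[4]) m) (mob (L++[4]) e1) = max (mob L m) (mob L gA2)
      rw [mob_append, mob_append]
      push_cast
      rw [f4m, f4e]
      exact max_comm _ _
    · show min (mob (L++[3]) m) (mob (L++[3]) e1) = min (mob L gB2) (mob L e3)
      rw [mob_append, mob_append]
      push_cast
      rw [f3m, f3e]
      exact min_comm _ _
    · show max (mob (L++[3]) m) (mob (L++[3]) e1) = max (mob L gB2) (mob L e3)
      rw [mob_append, mob_append]
      push_cast
      rw [f3m, f3e]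
      exact max_comm _ _

end HallP


-- Section 6: split and refine
namespace HallP

lemma len_eq {L : List ℕ} {s : ℕ} (hgood : goodL L) :
    nhi (L,s) - nlo (L,s) = W L m (eS s) := by
  obtain ⟨hm, h1, h2, h3, _⟩ := shape_pts s
  have hsub := mob_sub hgood (a := m) (b := eS s) hm.le (by linarith)
  have hW := W_pos hgood (a := m) (b := eS s) hm.le (by linarith) (by linarith)
  rcases detL_cases L with hd | hd
  · rw [hd, one_mul] at hsub
    rw [nlo, nhi, min_eq_left (by linarith), max_eq_right (by linarith)]
    exact hsub
  · rw [hd] at hsub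
    rw [nlo, nhi, min_eq_right (by linarith), max_eq_left (by linarith)]
    linarith

lemma split {L : List ℕ} {s : ℕ} (hgood : goodL L) (hs : s ≤ 2) :
    ∃ (c1 c2 : List ℕ × ℕ) (w1 w2 : ℝ),
      goodL c1.1 ∧ c1.2 ≤ 2 ∧ goodL c2.1 ∧ c2.2 ≤ 2 ∧
      rank (L,s) + 1 ≤ rank c1 ∧ rank (L,s) + 1 ≤ rank c2 ∧
      nlo c1 = nlo (L,s) ∧ nhi c1 = w1 ∧ nlo c2 = w2 ∧ nhi c2 = nhi (L,s) ∧
      nlo (L,s) ≤ w1 ∧ w1 ≤ w2 ∧ w2 ≤ nhi (L,s) ∧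
      w2 - w1 ≤ (nhi (L,s) - nlo (L,s))/4 ∧
      (nhi (L,s) - nlo (L,s))/4 ≤ w1 - nlo (L,s) ∧
      (nhi (L,s) - nlo (L,s))/4 ≤ nhi (L,s) - w2 ∧
      w1 - nlo (L,s) ≤ (13/25) * (nhi (L,s) - nlo (L,s)) ∧
      nhi (L,s) - w2 ≤ (13/25) * (nhi (L,s) - nlo (L,s)) := by
  obtain ⟨hm, h1, h2, h3, _⟩ := shape_pts s
  obtain ⟨g1, g2, g3, g4, g5, g6, e1lo, e1hi, e2lo, e2hi⟩ := children_spec hgood hs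
  have hW01 := W_pos hgood (a := m) (b := gAS s) hm.le (by linarith) h1
  have hW12 := W_pos hgood (a := gAS s) (b := gBS s) (by linarith) (by linarith) h2
  have hW23 := W_pos hgood (a := gBS s) (b := eS s) (by linarith) (by linarith) h3
  have hs01 := mob_sub hgood (a := m) (b := gAS s) hm.le (by linarith)
  have hs12 := mob_sub hgood (a := gAS s) (b := gBS s) (by linarith) (by linarith)
  have hs23 := mob_sub hgood (a := gBS s) (b := eS s) (by linarith) (by linarith)
  have hlen := len_eq (s := s) hgood
  have hgap := Wle_gap hgood s
  have hcAge := Wge_cA hgood s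
  have hcBge := Wge_cB hgood s
  have hcAle := Wle_cA hgood s
  have hcBle := Wle_cB hgood s
  rcases detL_cases L with hd | hd
  · -- increasing: P0 < P1 < P2 < P3
    rw [hd, one_mul] at hs01 hs12 hs23
    have o01 : mob L m < mob L (gAS s) := by linarith
    have o12 : mob L (gAS s) < mob L (gBS s) := by linarith
    have o23 : mob L (gBS s) < mob L (eS s) := by linarith
    have hlo : nlo (L,s) = mob L m := min_eq_left (by linarith)
    have hhi : nhi (L,s) = mob L (eS s) := max_eq_right (by linarith)
    refine ⟨(children (L,s)).1, (children (L,s)).2, mob L (gAS s), mob L (gBS s),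
      g1, g2, g3, g4, g5, g6, ?_, ?_, ?_, ?_, ?_, ?_, ?_, ?_, ?_, ?_, ?_, ?_⟩
    · rw [e1lo, hlo, min_eq_left o01.le]
    · rw [e1hi, max_eq_right o01.le]
    · rw [e2lo, min_eq_left o23.le]
    · rw [e2hi, hhi, max_eq_right o23.le]
    all_goals (try rw [hlen]); (try rw [hlo]); (try rw [hhi]); linarith
  · -- decreasing: P0 > P1 > P2 > P3
    rw [hd] at hs01 hs12 hs23
    have o01 : mob L (gAS s) < mob L m := by linarith
    have o12 : mob L (gBS s) < mob L (gAS s) := by linarith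
    have o23 : mob L (eS s) < mob L (gBS s) := by linarith
    have hlo : nlo (L,s) = mob L (eS s) := min_eq_right (by linarith)
    have hhi : nhi (L,s) = mob L m := max_eq_left (by linarith)
    refine ⟨(children (L,s)).2, (children (L,s)).1, mob L (gBS s), mob L (gAS s),
      g3, g4, g1, g2, g6, g5, ?_, ?_, ?_, ?_, ?_, ?_, ?_, ?_, ?_, ?_, ?_, ?_⟩
    · rw [e2lo, hlo, min_eq_right o23.le]
    · rw [e2hi, max_eq_left o23.le]
    · rw [e1lo, min_eq_right o01.le]
    · rw [e1hi, hhi, max_eq_left o01.le]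
    all_goals (try rw [hlen]); (try rw [hlo]); (try rw [hhi]); linarith

end HallP

-- Section 7: refinement step
namespace HallP

lemma refine_node {L : List ℕ} {s : ℕ} (hgood : goodL L) (hs : s ≤ 2) {t1 t2 : ℝ}
    (h1 : t1 ≤ nhi (L,s)) (h2 : nlo (L,s) ≤ t2)
    (hlen : (nhi (L,s) - nlo (L,s))/4 ≤ t2 - t1) :
    ∃ c : List ℕ × ℕ, goodL c.1 ∧ c.2 ≤ 2 ∧ rank (L,s) + 1 ≤ rank c ∧
      nlo (L,s) ≤ nlo c ∧ nhi c ≤ nhi (L,s) ∧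
      (nhi (L,s) - nlo (L,s))/4 ≤ nhi c - nlo c ∧
      nhi c - nlo c ≤ (13/25) * (nhi (L,s) - nlo (L,s)) ∧
      t1 ≤ nhi c ∧ nlo c ≤ t2 := by
  obtain ⟨c1, c2, w1, w2, hg1, hg2, hg3, hg4, hr1, hr2, hc1lo, hc1hi, hc2lo, hc2hi,
    hw1, hw12, hw2, hgap, hA, hB, hA', hB'⟩ := split hgood hs
  by_cases hc : w2 ≤ t2
  · refine ⟨c2, hg3, hg4, hr2, ?_, ?_, ?_, ?_, ?_, ?_⟩ <;> (try rw [hc2lo]) <;> (try rw [hc2hi]) <;> linarith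
  · push_neg at hc
    have ht1w1 : t1 ≤ w1 := by
      by_contra hcon
      push_neg at hcon
      linarith
    refine ⟨c1, hg1, hg2, hr1, ?_, ?_, ?_, ?_, ?_, ?_⟩ <;> (try rw [hc1lo]) <;> (try rw [hc1hi]) <;> linarith

/-- invariant of the two-node construction state -/
def Inv (sv : ℝ) (st : (List ℕ × ℕ) × (List ℕ × ℕ)) : Prop :=
  goodL st.1.1 ∧ st.1.2 ≤ 2 ∧ goodL st.2.1 ∧ st.2.2 ≤ 2 ∧
  nlo st.1 + nlo st.2 ≤ sv ∧ sv ≤ nhi st.1 + nhi st.2 ∧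
  nhi st.1 - nlo st.1 ≤ 4 * (nhi st.2 - nlo st.2) ∧
  nhi st.2 - nlo st.2 ≤ 4 * (nhi st.1 - nlo st.1)

lemma len_pos {L : List ℕ} {s : ℕ} (hgood : goodL L) : 0 < nhi (L,s) - nlo (L,s) := by
  obtain ⟨hm, h1, h2, h3, _⟩ := shape_pts s
  rw [len_eq hgood]
  exact W_pos hgood hm.le (by linarith) (by linarith)

/-- relation between consecutive states -/
def StepRel (a b : (List ℕ × ℕ) × (List ℕ × ℕ)) : Prop :=
  nlo a.1 ≤ nlo b.1 ∧ nhi b.1 ≤ nhi a.1 ∧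
  nlo a.2 ≤ nlo b.2 ∧ nhi b.2 ≤ nhi a.2 ∧
  (nhi b.1 - nlo b.1) * (nhi b.2 - nlo b.2)
    ≤ (13/25) * ((nhi a.1 - nlo a.1) * (nhi a.2 - nlo a.2)) ∧
  rank a.1 ≤ rank b.1 ∧ rank a.2 ≤ rank b.2 ∧
  ((b.1 = a.1 ∧ rank a.2 + 1 ≤ rank b.2) ∨ (b.2 = a.2 ∧ rank a.1 + 1 ≤ rank b.1))

lemma step {sv : ℝ} {st : (List ℕ × ℕ) × (List ℕ × ℕ)} (h : Inv sv st) :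
    ∃ st', Inv sv st' ∧ StepRel st st' := by
  rw [show (∃ st', Inv sv st' ∧ StepRel st st') = (∃ st', Inv sv st' ∧
      (nlo st.1 ≤ nlo st'.1 ∧ nhi st'.1 ≤ nhi st.1 ∧
      nlo st.2 ≤ nlo st'.2 ∧ nhi st'.2 ≤ nhi st.2 ∧
      (nhi st'.1 - nlo st'.1) * (nhi st'.2 - nlo st'.2)
        ≤ (13/25) * ((nhi st.1 - nlo st.1) * (nhi st.2 - nlo st.2)) ∧
      rank st.1 ≤ rank st'.1 ∧ rank st.2 ≤ rank st'.2 ∧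
      ((st'.1 = st.1 ∧ rank st.2 + 1 ≤ rank st'.2) ∨
        (st'.2 = st.2 ∧ rank st.1 + 1 ≤ rank st'.1)))) from rfl]
  obtain ⟨hgx, hsx, hgy, hsy, hsum1, hsum2, hbal1, hbal2⟩ := h
  obtain ⟨X, Y⟩ := st
  obtain ⟨LX, sX⟩ := X
  obtain ⟨LY, sY⟩ := Y
  simp only at *
  have hlpx := len_pos (s := sX) hgx
  have hlpy := len_pos (s := sY) hgy
  by_cases hxy : nhi (LY,sY) - nlo (LY,sY) ≤ nhi (LX,sX) - nlo (LX,sX)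
  · -- refine X against T = [sv - nhi Y, sv - nlo Y]
    obtain ⟨c, hc1, hc2, hc3, hc4, hc5, hc6, hc7, hc8, hc9⟩ :=
      refine_node (t1 := sv - nhi (LY,sY)) (t2 := sv - nlo (LY,sY)) hgx hsx
        (by linarith) (by linarith) (by linarith)
    refine ⟨(c, (LY,sY)), ⟨hc1, hc2, hgy, hsy, by linarith, by linarith, ?_, ?_⟩,
      hc4, hc5, le_refl _, le_refl _, ?_, (by omega : _ ≤ _).trans hc3, le_refl _,
      Or.inr ⟨rfl, hc3⟩⟩
    · linarith
    · linarith
    · nlinarith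
  · push_neg at hxy
    obtain ⟨c, hc1, hc2, hc3, hc4, hc5, hc6, hc7, hc8, hc9⟩ :=
      refine_node (t1 := sv - nhi (LX,sX)) (t2 := sv - nlo (LX,sX)) hgy hsy
        (by linarith) (by linarith) (by linarith)
    refine ⟨((LX,sX), c), ⟨hgx, hsx, hc1, hc2, by linarith, by linarith, ?_, ?_⟩,
      le_refl _, le_refl _, hc4, hc5, ?_, le_refl _, (by omega : _ ≤ _).trans hc3,
      Or.inl ⟨rfl, hc3⟩⟩
    · linarith
    · linarith
    · nlinarith

end HallP

-- Section 8: the construction and hard direction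
namespace HallP

lemma geom_small {c : ℝ} (hc : 0 < c) {ε : ℝ} (hε : 0 < ε) :
    ∃ n : ℕ, c * (13/25)^n < ε := by
  obtain ⟨n, hn⟩ := pow_unbounded_of_one_lt (c/ε) (show (1:ℝ) < 25/13 by norm_num)
  have hp : (0:ℝ) < ((25:ℝ)/13)^n := by positivity
  have h2 : c < (25/13)^n * ε := (div_lt_iff₀ hε).1 hn
  have h3 : ((13:ℝ)/25)^n = (((25:ℝ)/13)^n)⁻¹ := by
    rw [← inv_pow]; norm_num
  refine ⟨n, ?_⟩
  rw [h3]
  calc c * (((25:ℝ)/13)^n)⁻¹ < ((25/13)^n * ε) * (((25:ℝ)/13)^n)⁻¹ :=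
        mul_lt_mul_of_pos_right h2 (by positivity)
    _ = ε := by field_simp

lemma nlo_nil : nlo ((([]:List ℕ), 0)) = m ∧ nhi ((([]:List ℕ), 0)) = e1 :=
  ⟨min_eq_left m_lt_e1.le, max_eq_right m_lt_e1.le⟩

lemma hard_dir {sv : ℝ} (hs1 : 2*m ≤ sv) (hs2 : sv ≤ 2*e1) :
    ∃ x ∈ cantorSetCF 4, ∃ y ∈ cantorSetCF 4, sv = x + y := by
  classical
  set st0 : (List ℕ × ℕ) × (List ℕ × ℕ) := ((([]:List ℕ), 0), (([]:List ℕ), 0)) with hst0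
  have hInv0 : Inv sv st0 := by
    have hmlt := m_lt_e1
    refine ⟨goodL_nil, by norm_num, goodL_nil, by norm_num, ?_, ?_, ?_, ?_⟩
    · show nlo (([]:List ℕ),0) + nlo (([]:List ℕ),0) ≤ sv
      rw [nlo_nil.1]; linarith
    · show sv ≤ nhi (([]:List ℕ),0) + nhi (([]:List ℕ),0)
      rw [nlo_nil.2]; linarith
    · show nhi (([]:List ℕ),0) - nlo (([]:List ℕ),0) ≤ 4*(nhi (([]:List ℕ),0) - nlo (([]:List ℕ),0))
      rw [nlo_nil.1, nlo_nil.2]; linarith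
    · show nhi (([]:List ℕ),0) - nlo (([]:List ℕ),0) ≤ 4*(nhi (([]:List ℕ),0) - nlo (([]:List ℕ),0))
      rw [nlo_nil.1, nlo_nil.2]; linarith
  let F : {st // Inv sv st} → {st // Inv sv st} :=
    fun p => ⟨(step p.2).choose, (step p.2).choose_spec.1⟩
  let S : ℕ → {st // Inv sv st} := fun n => F^[n] ⟨st0, hInv0⟩
  have hS0 : (S 0).1 = st0 := rfl
  have hSsucc : ∀ n, S (n+1) = F (S n) := fun n => Function.iterate_succ_apply' F n _
  have hrel : ∀ n, StepRel (S n).1 (S (n+1)).1 := by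
    intro n
    rw [hSsucc n]
    exact (step (S n).2).choose_spec.2
  -- abbreviations
  let A : ℕ → ℝ := fun n => nlo (S n).1.1
  let B : ℕ → ℝ := fun n => nhi (S n).1.1
  let C : ℕ → ℝ := fun n => nlo (S n).1.2
  let D : ℕ → ℝ := fun n => nhi (S n).1.2
  have hInv : ∀ n, Inv sv (S n).1 := fun n => (S n).2
  have hlen1 : ∀ n, 0 < B n - A n := fun n => by
    obtain ⟨h1, _, _, _⟩ := hInv n
    have := len_pos (s := (S n).1.1.2) h1
    simpa using this
  have hlen2 : ∀ n, 0 < D n - C n := fun n => by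
    obtain ⟨_, _, h3, _⟩ := hInv n
    have := len_pos (s := (S n).1.2.2) h3
    simpa using this
  have hAmono : Monotone A := monotone_nat_of_le_succ (fun n => (hrel n).1)
  have hBanti : Antitone B := antitone_nat_of_succ_le (fun n => (hrel n).2.1)
  have hCmono : Monotone C := monotone_nat_of_le_succ (fun n => (hrel n).2.2.1)
  have hDanti : Antitone D := antitone_nat_of_succ_le (fun n => (hrel n).2.2.2.1)
  -- product decay
  have hproddecay : ∀ n, (B n - A n) * (D n - C n) ≤ (13/25)^n * ((B 0 - A 0) * (D 0 - C 0)) := by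
    intro n
    induction n with
    | zero => simp
    | succ n ih =>
      have h1 := (hrel n).2.2.2.2.1
      calc (B (n+1) - A (n+1)) * (D (n+1) - C (n+1))
          ≤ (13/25) * ((B n - A n) * (D n - C n)) := h1
        _ ≤ (13/25) * ((13/25)^n * ((B 0 - A 0) * (D 0 - C 0))) := by linarith
        _ = (13/25)^(n+1) * ((B 0 - A 0) * (D 0 - C 0)) := by ring
  -- balance
  have hbal1 : ∀ n, B n - A n ≤ 4 * (D n - C n) := fun n => (hInv n).2.2.2.2.2.2.1
  have hbal2 : ∀ n, D n - C n ≤ 4 * (B n - A n) := fun n => (hInv n).2.2.2.2.2.2.2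
  have hsum1 : ∀ n, A n + C n ≤ sv := fun n => (hInv n).2.2.2.2.1
  have hsum2 : ∀ n, sv ≤ B n + D n := fun n => (hInv n).2.2.2.2.2.1
  -- total length control
  have hsmall : ∀ ε : ℝ, 0 < ε → ∃ n, (B n - A n) + (D n - C n) < ε := by
    intro ε hε
    obtain ⟨n, hn⟩ := geom_small
      (mul_pos (mul_pos (by norm_num : (0:ℝ) < 25) (hlen1 0)) (hlen2 0)) (mul_pos hε hε)
    refine ⟨n, ?_⟩
    have h1 : ((B n - A n) + (D n - C n))^2 ≤ 25 * ((B n - A n) * (D n - C n)) := by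
      nlinarith [hbal1 n, hbal2 n, hlen1 n, hlen2 n]
    have h2 : 25 * ((B n - A n) * (D n - C n)) ≤ 25 * (B 0 - A 0) * (D 0 - C 0) * (13/25)^n := by
      have := hproddecay n
      nlinarith [this]
    nlinarith [hlen1 n, hlen2 n, hε]
  -- define x and y
  have hAbdd : BddAbove (Set.range A) := by
    refine ⟨B 0, ?_⟩
    rintro _ ⟨n, rfl⟩
    linarith [hlen1 n, hBanti (Nat.zero_le n)]
  have hCbdd : BddAbove (Set.range C) := by
    refine ⟨D 0, ?_⟩
    rintro _ ⟨n, rfl⟩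
    linarith [hlen2 n, hDanti (Nat.zero_le n)]
  set x : ℝ := sSup (Set.range A) with hx
  set y : ℝ := sSup (Set.range C) with hy
  have hxmem : ∀ n, A n ≤ x ∧ x ≤ B n := by
    intro n
    constructor
    · exact le_csSup hAbdd ⟨n, rfl⟩
    · refine csSup_le ⟨A 0, 0, rfl⟩ ?_
      rintro _ ⟨k, rfl⟩
      rcases le_total k n with h | h
      · linarith [hAmono h, hlen1 n]
      · linarith [hlen1 k, hBanti h]
  have hymem : ∀ n, C n ≤ y ∧ y ≤ D n := by
    intro n
    constructor
    · exact le_csSup hCbdd ⟨n, rfl⟩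
    · refine csSup_le ⟨C 0, 0, rfl⟩ ?_
      rintro _ ⟨k, rfl⟩
      rcases le_total k n with h | h
      · linarith [hCmono h, hlen2 n]
      · linarith [hlen2 k, hDanti h]
  -- x + y = sv
  have hxy : sv = x + y := by
    by_contra hne
    have habs : 0 < |sv - (x+y)| := by
      refine abs_pos.2 (fun h => hne ?_)
      have := sub_eq_zero.1 h
      linarith
    obtain ⟨n, hn⟩ := hsmall _ habs
    have h1 := (hxmem n).1; have h2 := (hxmem n).2
    have h3 := (hymem n).1; have h4 := (hymem n).2
    have h5 := hsum1 n; have h6 := hsum2 n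
    rcases abs_cases (sv - (x+y)) with ⟨heq, _⟩ | ⟨heq, _⟩ <;> linarith
  -- ranks of side 1 go to infinity
  have hrk1mono : ∀ {a b : ℕ}, a ≤ b → rank (S a).1.1 ≤ rank (S b).1.1 := by
    intro a b hab
    induction b, hab using Nat.le_induction with
    | base => exact le_refl _
    | succ b hab ih => exact le_trans ih (hrel b).2.2.2.2.2.1
  have hrk2mono : ∀ {a b : ℕ}, a ≤ b → rank (S a).1.2 ≤ rank (S b).1.2 := by
    intro a b hab
    induction b, hab using Nat.le_induction with
    | base => exact le_refl _
    | succ b hab ih => exact le_trans ih (hrel b).2.2.2.2.2.2.1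
  -- if side-1 length strictly decreased, its rank strictly increased
  have hchange1 : ∀ n p, n ≤ p → B p - A p < B n - A n → rank (S n).1.1 + 1 ≤ rank (S p).1.1 := by
    intro n p hnp
    induction p, hnp using Nat.le_induction with
    | base => intro h; linarith
    | succ p hnp ih =>
      intro hlt
      rcases (hrel p).2.2.2.2.2.2.2 with ⟨heq, _⟩ | ⟨_, hrk⟩
      · have hBA : B (p+1) - A (p+1) = B p - A p := by
          simp only [B, A, heq]
        exact le_trans (ih (by linarith)) (hrk1mono (Nat.le_succ p))
      · exact le_trans (by have := hrk1mono hnp; omega) hrk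
  have hchange2 : ∀ n p, n ≤ p → D p - C p < D n - C n → rank (S n).1.2 + 1 ≤ rank (S p).1.2 := by
    intro n p hnp
    induction p, hnp using Nat.le_induction with
    | base => intro h; linarith
    | succ p hnp ih =>
      intro hlt
      rcases (hrel p).2.2.2.2.2.2.2 with ⟨_, hrk⟩ | ⟨heq, _⟩
      · exact le_trans (by have := hrk2mono hnp; omega) hrk
      · have hDC : D (p+1) - C (p+1) = D p - C p := by
          simp only [D, C, heq]
        exact le_trans (ih (by linarith)) (hrk2mono (Nat.le_succ p))
  -- lengths tend to 0 (squared against product)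
  have hlen1small : ∀ n, (B n - A n)^2 ≤ 4 * ((B n - A n) * (D n - C n)) := by
    intro n; nlinarith [hbal1 n, hlen1 n, hlen2 n]
  have hlen2small : ∀ n, (D n - C n)^2 ≤ 4 * ((B n - A n) * (D n - C n)) := by
    intro n; nlinarith [hbal2 n, hlen1 n, hlen2 n]
  have hrank1unbdd : ∀ K : ℕ, ∃ n, K ≤ rank (S n).1.1 := by
    intro K
    induction K with
    | zero => exact ⟨0, by omega⟩
    | succ K ih =>
      obtain ⟨n, hn⟩ := ih
      obtain ⟨p0, hp0⟩ := geom_small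
        (mul_pos (mul_pos (by norm_num : (0:ℝ) < 4) (hlen1 0)) (hlen2 0))
        (mul_pos (hlen1 n) (hlen1 n))
      refine ⟨max n p0, ?_⟩
      have hmx : n ≤ max n p0 := le_max_left _ _
      have hdecay : (B (max n p0) - A (max n p0)) * (D (max n p0) - C (max n p0))
          ≤ (13/25)^p0 * ((B 0 - A 0) * (D 0 - C 0)) := by
        refine le_trans (hproddecay (max n p0)) ?_
        have h1 : ((13:ℝ)/25)^(max n p0) ≤ (13/25)^p0 :=
          pow_le_pow_of_le_one (by norm_num) (by norm_num) (le_max_right _ _)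
        nlinarith [mul_pos (hlen1 0) (hlen2 0)]
      have hlt : B (max n p0) - A (max n p0) < B n - A n := by
        nlinarith [hlen1 (max n p0), hlen2 (max n p0), hlen1 n,
          hlen1small (max n p0)]
      have := hchange1 n (max n p0) hmx hlt
      omega
  have hrank2unbdd : ∀ K : ℕ, ∃ n, K ≤ rank (S n).1.2 := by
    intro K
    induction K with
    | zero => exact ⟨0, by omega⟩
    | succ K ih =>
      obtain ⟨n, hn⟩ := ih
      obtain ⟨p0, hp0⟩ := geom_small
        (mul_pos (mul_pos (by norm_num : (0:ℝ) < 4) (hlen1 0)) (hlen2 0))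
        (mul_pos (hlen2 n) (hlen2 n))
      refine ⟨max n p0, ?_⟩
      have hmx : n ≤ max n p0 := le_max_left _ _
      have hdecay : (B (max n p0) - A (max n p0)) * (D (max n p0) - C (max n p0))
          ≤ (13/25)^p0 * ((B 0 - A 0) * (D 0 - C 0)) := by
        refine le_trans (hproddecay (max n p0)) ?_
        have h1 : ((13:ℝ)/25)^(max n p0) ≤ (13/25)^p0 :=
          pow_le_pow_of_le_one (by norm_num) (by norm_num) (le_max_right _ _)
        nlinarith [mul_pos (hlen1 0) (hlen2 0)]
      have hlt : D (max n p0) - C (max n p0) < D n - C n := by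
        nlinarith [hlen1 (max n p0), hlen2 (max n p0), hlen2 n,
          hlen2small (max n p0)]
      have := hchange2 n (max n p0) hmx hlt
      omega
  -- membership criterion
  have hxC4 : x ∈ cantorSetCF 4 := by
    apply mem_C4
    intro nn
    obtain ⟨n, hn⟩ := hrank1unbdd (3*nn + 3)
    obtain ⟨hg1, hg2, _⟩ := hInv n
    have hlenL : nn ≤ (S n).1.1.1.length := by
      have hr : rank (S n).1.1 = 3*(S n).1.1.1.length + (S n).1.1.2 := rfl
      rw [hr] at hn
      omega
    refine ⟨(S n).1.1.1, hg1, hlenL, ?_⟩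
    obtain ⟨hm, h1, h2, h3, he⟩ := shape_pts (S n).1.1.2
    have hmemb : x ∈ Set.uIcc (mob (S n).1.1.1 m) (mob (S n).1.1.1 (eS (S n).1.1.2)) := by
      have huicc : Set.uIcc (mob (S n).1.1.1 m) (mob (S n).1.1.1 (eS (S n).1.1.2))
          = Set.Icc (A n) (B n) := by
        rw [Set.uIcc]
        rfl
      rw [huicc]
      exact ⟨(hxmem n).1, (hxmem n).2⟩
    obtain ⟨t, ht, hmt⟩ := mob_surj hg1 (a := m) (b := eS (S n).1.1.2) hm.le
      (by linarith) (by linarith [e1_lt_one]) hmemb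
    exact ⟨t, ⟨ht.1, le_trans ht.2 he⟩, hmt⟩
  have hyC4 : y ∈ cantorSetCF 4 := by
    apply mem_C4
    intro nn
    obtain ⟨n, hn⟩ := hrank2unbdd (3*nn + 3)
    obtain ⟨_, _, hg3, hg4, _⟩ := hInv n
    have hlenL : nn ≤ (S n).1.2.1.length := by
      have hr : rank (S n).1.2 = 3*(S n).1.2.1.length + (S n).1.2.2 := rfl
      rw [hr] at hn
      omega
    refine ⟨(S n).1.2.1, hg3, hlenL, ?_⟩
    obtain ⟨hm, h1, h2, h3, he⟩ := shape_pts (S n).1.2.2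
    have hmemb : y ∈ Set.uIcc (mob (S n).1.2.1 m) (mob (S n).1.2.1 (eS (S n).1.2.2)) := by
      have huicc : Set.uIcc (mob (S n).1.2.1 m) (mob (S n).1.2.1 (eS (S n).1.2.2))
          = Set.Icc (C n) (D n) := by
        rw [Set.uIcc]
        rfl
      rw [huicc]
      exact ⟨(hymem n).1, (hymem n).2⟩
    obtain ⟨t, ht, hmt⟩ := mob_surj hg3 (a := m) (b := eS (S n).1.2.2) hm.le
      (by linarith) (by linarith [e1_lt_one]) hmemb
    exact ⟨t, ⟨ht.1, le_trans ht.2 he⟩, hmt⟩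
  exact ⟨x, hxC4, y, hyC4, hxy⟩

end HallP

namespace HallP

lemma endpoints1 : Real.sqrt 2 - 1 = 2 * m := by unfold m r; ring
lemma endpoints2 : 4 * (Real.sqrt 2 - 1) = 2 * e1 := by unfold e1 r; ring

end HallP

end

/-- **Hall (1947)**: the Minkowski sum `C(4) + C(4)` equals the interval `[√2 - 1, 4(√2 - 1)]`. -/
theorem hall_sum_C4 :
    {s : ℝ | ∃ x ∈ cantorSetCF 4, ∃ y ∈ cantorSetCF 4, s = x + y} =
      Set.Icc (Real.sqrt 2 - 1) (4 * (Real.sqrt 2 - 1)) := by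
  ext s
  simp only [Set.mem_setOf_eq, Set.mem_Icc]
  constructor
  · rintro ⟨x, hx, y, hy, rfl⟩
    rw [HallP.endpoints2, HallP.endpoints1]
    have h1 := HallP.C4_ge hx
    have h2 := HallP.C4_le hx
    have h3 := HallP.C4_ge hy
    have h4 := HallP.C4_le hy
    constructor <;> linarith
  · rintro ⟨h1, h2⟩
    rw [HallP.endpoints1] at h1
    rw [HallP.endpoints2] at h2
    exact HallP.hard_dir h1 h2
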